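/- Let F be a field with more than 2 elements and let H be a hyperplane of projective n-space over F. Then there exists a set of n+2 points, every (n+1)-subset of which spans the whole space (a coordinate system/frame), such that none of the n+2 points lies in H. -/

import Mathlib

open scoped LinearAlgebra.Projectivization
open Projectivization

/-- The linear span of a set of points of a projective space, as a submodule
of the underlying vector space. -/
noncomputable def pspan (K : Type*) {V : Type*} [DivisionRing K] [AddCommGroup V] [Module K V]
    (s : Set (ℙ K V)) : Submodule K V :=
  ⨆ P ∈ s, Projectivization.submodule P

/-- Over a field with more than two elements, for any hyperplane `H` of
projective `n`-space there exists a coordinate system (frame) of `n+2` points,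
every `n+1` of which span the space, none of which lies in `H`. -/
theorem frame_avoiding_hyperplane {K : Type*} [Field K]
    -- `K` has more than two elements
    (hK : ∃ x : K, x ≠ 0 ∧ x ≠ 1)
    {n : ℕ} (H : Submodule K (Fin (n+1) → K)) (hH : Module.finrank K H = n) :
    ∃ P : Fin (n+2) → ℙ K (Fin (n+1) → K),
      (∀ S : Finset (Fin (n+2)), S.card = n + 1 → pspan K (P '' ↑S) = ⊤) ∧
      ∀ i : Fin (n+2), ¬ (P i).submodule ≤ H := by
  classical
  obtain ⟨x, hx0, hx1⟩ := hK
  have hV : Module.finrank K (Fin (n+1) → K) = n + 1 := by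
    rw [Module.finrank_fintype_fun_eq_card]; simp
  have hq : Module.finrank K ((Fin (n+1) → K) ⧸ H) = 1 := by
    have h1 := Submodule.finrank_quotient_add_finrank H
    rw [hH, hV] at h1; omega
  let B := Module.finBasisOfFinrankEq K ((Fin (n+1) → K) ⧸ H) hq
  let φ : (Fin (n+1) → K) →ₗ[K] K :=
    (LinearMap.proj (0 : Fin 1)).comp (B.equivFun.toLinearMap.comp H.mkQ)
  have hker : ∀ u : Fin (n+1) → K, φ u = 0 ↔ u ∈ H := by
    intro u
    constructor
    · intro h
      have h2 : B.equivFun (H.mkQ u) = 0 := by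
        funext j
        have : j = 0 := Subsingleton.elim _ _
        simpa [this, φ] using h
      have h3 : H.mkQ u = 0 := by
        simpa using B.equivFun.map_eq_zero_iff.mp h2
      simpa [Submodule.mkQ_apply, Submodule.Quotient.mk_eq_zero] using h3
    · intro h
      have h3 : H.mkQ u = 0 := by
        simpa [Submodule.mkQ_apply, Submodule.Quotient.mk_eq_zero] using h
      simp [φ, h3]
  have hHtop : H ≠ ⊤ := by
    intro h
    rw [h, finrank_top, hV] at hH
    omega
  obtain ⟨w, hw⟩ : ∃ w, w ∉ H := by
    by_contra h
    push_neg at h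
    exact hHtop (Submodule.eq_top_iff'.mpr h)
  have hφw : φ w ≠ 0 := fun h => hw ((hker w).mp h)
  set v : Fin (n+1) → K := (φ w)⁻¹ • w with hvdef
  have hφv : φ v = 1 := by
    rw [hvdef, map_smul, smul_eq_mul, inv_mul_cancel₀ hφw]
  let c := Module.finBasisOfFinrankEq K H hH
  have hφc : ∀ i : Fin n, φ (c i : Fin (n+1) → K) = 0 := fun i => (hker _).mpr (c i).2
  -- choose the scalar a
  set a : K := if (1 : K) + n = 0 then x else 1 with hadef
  have ha0 : a ≠ 0 := by
    rw [hadef]; split <;> simp [hx0]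
  have has : a + n ≠ 0 := by
    rw [hadef]; split
    · intro h
      rename_i h1
      apply hx1
      exact add_right_cancel (h.trans h1.symm)
    · assumption
  -- the basis vectors
  set b : Fin (n+1) → (Fin (n+1) → K) :=
    Fin.cons (a • v) (fun i => (c i : Fin (n+1) → K) + v) with hbdef
  have hb0 : b 0 = a • v := by rw [hbdef]; simp
  have hbs : ∀ i : Fin n, b i.succ = (c i : Fin (n+1) → K) + v := by
    intro i; rw [hbdef]; simp
  have hφb0 : φ (b 0) = a := by
    rw [hb0, map_smul, smul_eq_mul, hφv, mul_one]
  have hφbs : ∀ i : Fin n, φ (b i.succ) = 1 := by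
    intro i
    rw [hbs, map_add, hφc, hφv, zero_add]
  have hφb' : ∀ i : Fin (n+1), φ (b i) ≠ 0 := by
    refine Fin.cases ?_ ?_
    · rw [hφb0]; exact ha0
    · intro i; rw [hφbs]; exact one_ne_zero
  have hφsum : φ (∑ i, b i) = a + n := by
    rw [map_sum, Fin.sum_univ_succ, hφb0]
    congr 1
    calc ∑ i : Fin n, φ (b i.succ) = ∑ _i : Fin n, (1:K) :=
          Finset.sum_congr rfl fun i _ => hφbs i
      _ = n := by simp
  -- span of the basis vectors is everything
  set W : Submodule K (Fin (n+1) → K) := Submodule.span K (Set.range b) with hWdef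
  have hvW : v ∈ W := by
    have h1 : v = a⁻¹ • b 0 := by rw [hb0, smul_smul, inv_mul_cancel₀ ha0, one_smul]
    rw [h1]
    exact Submodule.smul_mem _ _ (Submodule.subset_span ⟨0, rfl⟩)
  have hcW : ∀ i : Fin n, (c i : Fin (n+1) → K) ∈ W := by
    intro i
    have h1 : (c i : Fin (n+1) → K) = b i.succ - v := by rw [hbs]; abel
    rw [h1]
    exact sub_mem (Submodule.subset_span ⟨i.succ, rfl⟩) hvW
  have hHW : ∀ u ∈ H, u ∈ W := by
    have h2 : H = Submodule.span K (H.subtype '' Set.range c) := by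
      rw [← Submodule.map_span, c.span_eq, Submodule.map_top, Submodule.range_subtype]
    intro u hu
    rw [h2] at hu
    refine Submodule.span_le.mpr ?_ hu
    rintro _ ⟨_, ⟨i, rfl⟩, rfl⟩
    exact hcW i
  have hspan : W = ⊤ := by
    rw [eq_top_iff]
    intro u _
    have h1 : u - φ u • v ∈ H := by
      rw [← hker, map_sub, map_smul, hφv, smul_eq_mul, mul_one, sub_self]
    have h2 : u = (u - φ u • v) + φ u • v := by abel
    rw [h2]
    exact add_mem (hHW _ h1) (Submodule.smul_mem _ _ hvW)
  -- the frame vectors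
  set vv : Fin (n+2) → (Fin (n+1) → K) := Fin.snoc b (∑ i, b i) with hvvdef
  have hvvc : ∀ j : Fin (n+1), vv j.castSucc = b j := by
    intro j; rw [hvvdef]; simp
  have hvvl : vv (Fin.last (n+1)) = ∑ i, b i := by rw [hvvdef]; simp
  have hφvv : ∀ i : Fin (n+2), φ (vv i) ≠ 0 := by
    refine Fin.lastCases ?_ ?_
    · rw [hvvl, hφsum]; exact has
    · intro j; rw [hvvc]; exact hφb' j
  have hnz : ∀ i : Fin (n+2), vv i ≠ 0 := fun i h => hφvv i (by rw [h, map_zero])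
  refine ⟨fun i => mk K (vv i) (hnz i), ?_, ?_⟩
  · intro S hS
    have hcard : Sᶜ.card = 1 := by
      rw [Finset.card_compl, hS]
      simp
    obtain ⟨k, hk⟩ := Finset.card_eq_one.mp hcard
    have hmem : ∀ i : Fin (n+2), i ∈ S ↔ i ≠ k := by
      intro i
      constructor
      · intro hi h
        have hk2 : i ∈ Sᶜ := by rw [hk, h]; exact Finset.mem_singleton_self _
        exact (Finset.mem_compl.mp hk2) hi
      · intro hne
        by_contra h
        have : i ∈ Sᶜ := Finset.mem_compl.mpr h
        rw [hk, Finset.mem_singleton] at this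
        exact hne this
    set W' : Submodule K (Fin (n+1) → K) := ⨆ i ∈ S, Submodule.span K {vv i} with hW'def
    have hWle : ∀ i ∈ S, vv i ∈ W' := by
      intro i hi
      exact le_biSup (fun i => Submodule.span K {vv i}) hi (Submodule.mem_span_singleton_self _)
    have hbW' : ∀ j : Fin (n+1), b j ∈ W' := by
      by_cases hkl : k = Fin.last (n+1)
      · intro j
        have hjS : j.castSucc ∈ S := (hmem _).mpr (by rw [hkl]; exact (Fin.castSucc_lt_last j).ne)
        have := hWle _ hjS
        rwa [hvvc] at this
      · obtain ⟨k', rfl⟩ : ∃ k', k = k'.castSucc :=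
          ⟨k.castPred hkl, (Fin.castSucc_castPred k hkl).symm⟩
        have hlastS : Fin.last (n+1) ∈ S :=
          (hmem _).mpr (fun h => hkl h.symm)
        have hsumW : (∑ i, b i) ∈ W' := by
          have := hWle _ hlastS; rwa [hvvl] at this
        have hb' : ∀ j : Fin (n+1), j ≠ k' → b j ∈ W' := by
          intro j hj
          have hjS : j.castSucc ∈ S := (hmem _).mpr (by
            intro h
            exact hj (Fin.castSucc_injective _ h))
          have := hWle _ hjS
          rwa [hvvc] at this
        have hbk : b k' ∈ W' := by
          have h1 : ∑ i, b i = b k' + ∑ i ∈ Finset.univ.erase k', b i :=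
            (Finset.add_sum_erase _ _ (Finset.mem_univ _)).symm
          have h2 : (∑ i ∈ Finset.univ.erase k', b i) ∈ W' :=
            Submodule.sum_mem _ (fun j hj => hb' j (Finset.ne_of_mem_erase hj))
          have h3 : b k' = (∑ i, b i) - ∑ i ∈ Finset.univ.erase k', b i := by
            rw [h1]; abel
          rw [h3]
          exact sub_mem hsumW h2
        intro j
        by_cases hj : j = k'
        · rw [hj]; exact hbk
        · exact hb' j hj
    have htop : W' = ⊤ := by
      rw [eq_top_iff, ← hspan, hWdef]
      refine Submodule.span_le.mpr ?_
      rintro _ ⟨j, rfl⟩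
      exact hbW' j
    rw [pspan, iSup_image]
    simp only [submodule_mk, Finset.mem_coe]
    exact htop
  · intro i hle
    have h1 : vv i ∈ H := by
      apply hle
      rw [submodule_mk]
      exact Submodule.mem_span_singleton_self _
    exact hφvv i ((hker _).mpr h1)
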